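/- Let A be a C*-algebra and μ an irreducible *-representation of A on a finite-dimensional Hilbert space H. Then the kernel of μ is a maximal ideal of A, i.e. the singleton {[μ]} is a closed subset of the spectrum of A (in the hull-kernel topology on primitive ideals, ker μ is a closed point). -/

import Mathlib

/-- If `μ` is an irreducible *-representation of a C*-algebra `A` on a
finite-dimensional Hilbert space `H`, then `ker μ` is a closed point of the spectrum:
no irreducible representation has kernel strictly containing `ker μ`. -/
theorem stmt_0
    {A : Type*} [NormedRing A] [StarRing A] [CStarRing A] [NormedAlgebra ℂ A]
    [StarModule ℂ A] [CompleteSpace A]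
    {H : Type*} [NormedAddCommGroup H] [InnerProductSpace ℂ H] [CompleteSpace H]
    [FiniteDimensional ℂ H] [Nontrivial H]
    (μ : A →⋆ₐ[ℂ] (H →L[ℂ] H))
    (hμirr : ∀ S : Submodule ℂ H, IsClosed (S : Set H) →
      (∀ a : A, ∀ x ∈ S, μ a x ∈ S) → S = ⊥ ∨ S = ⊤) :
    ∀ (K : Type) (_ : NormedAddCommGroup K), ∀ (_ : InnerProductSpace ℂ K)
      (_ : CompleteSpace K), Nontrivial K →
      ∀ ν : A →⋆ₐ[ℂ] (K →L[ℂ] K),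
        (∀ S : Submodule ℂ K, IsClosed (S : Set K) →
          (∀ a : A, ∀ x ∈ S, ν a x ∈ S) → S = ⊥ ∨ S = ⊤) →
        (∀ a : A, μ a = 0 → ν a = 0) →
        (∀ a : A, ν a = 0 → μ a = 0) := by
  intro K _ _ _ hK ν _hνirr hker a hνa
  classical
  -- Make `H` an `A`-module via `μ`.
  letI : Module A H := Module.compHom H μ.toRingHom
  have hsmul : ∀ (b : A) (x : H), b • x = μ b x := fun _ _ => rfl
  have halg : ∀ (c : ℂ) (x : H), (algebraMap ℂ A c) • x = c • x := by
    intro c x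
    rw [hsmul, AlgHomClass.commutes]
    simp [Algebra.algebraMap_eq_smul_one]
  -- The joint kernel of `μ b` for `b ∈ ker ν`.
  set S : Submodule ℂ H :=
    { carrier := {x | ∀ b : A, ν b = 0 → μ b x = 0}
      add_mem' := fun hx hy b hb => by
        rw [map_add, hx b hb, hy b hb, add_zero]
      zero_mem' := fun b _ => map_zero (μ b)
      smul_mem' := fun c x hx b hb => by
        rw [map_smul, hx b hb, smul_zero] } with hSdef
  have hSmem : ∀ x : H, x ∈ S ↔ ∀ b : A, ν b = 0 → μ b x = 0 := fun _ => Iff.rfl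
  have hSinv : ∀ a' : A, ∀ x ∈ S, μ a' x ∈ S := by
    intro a' x hx b hb
    have hba' : ν (b * a') = 0 := by rw [map_mul, hb, zero_mul]
    have := (hSmem x).mp hx (b * a') hba'
    rw [map_mul] at this
    exact this
  rcases hμirr S (Submodule.closed_of_finiteDimensional S) hSinv with hS | hS
  · -- `S = ⊥`: we derive a contradiction.
    exfalso
    -- Every `A`-submodule of `H` is `⊥` or `⊤`.
    have hA2C : ∀ p : Submodule A H, p = ⊥ ∨ p = ⊤ := by
      intro p
      let pc : Submodule ℂ H :=
        { carrier := p
          add_mem' := fun hx hy => p.add_mem hx hy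
          zero_mem' := p.zero_mem
          smul_mem' := fun c x hx => by
            have := p.smul_mem (algebraMap ℂ A c) hx
            rwa [halg] at this }
      have hpc : ∀ x : H, x ∈ pc ↔ x ∈ p := fun _ => Iff.rfl
      rcases hμirr pc (Submodule.closed_of_finiteDimensional pc)
          (fun a' x hx => by
            have := p.smul_mem a' ((hpc x).mp hx)
            rw [hsmul] at this
            exact (hpc _).mpr this) with h | h
      · left
        rw [eq_bot_iff]
        intro x hx
        have : x ∈ pc := (hpc x).mpr hx
        rw [h] at this
        exact this
      · right
        rw [eq_top_iff]
        intro x _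
        have : x ∈ pc := h ▸ Submodule.mem_top
        exact (hpc x).mp this
    haveI : Nontrivial (Submodule A H) := by
      obtain ⟨x, hx⟩ := exists_ne (0 : H)
      refine ⟨⊥, ⊤, fun h => hx ?_⟩
      have : x ∈ (⊥ : Submodule A H) := h ▸ Submodule.mem_top
      exact this
    haveI : IsSimpleModule A H := { eq_bot_or_eq_top := hA2C }
    haveI : IsSemisimpleModule A H := by
      refine IsSemisimpleModule.of_sSup_simples_eq_top ?_
      refine le_antisymm le_top (le_sSup ?_)
      show IsSimpleModule A (⊤ : Submodule A H)
      exact IsSimpleModule.congr Submodule.topEquiv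
    set n := Module.finrank ℂ H with hn
    haveI : IsSemisimpleModule A (Fin n → H) :=
      isSemisimpleModule_of_isSemisimpleModule_submodule'
        (p := fun i => LinearMap.range (LinearMap.single A (fun _ => H) i))
        (fun i => .range _) (LinearMap.iSup_range_single A _)
    let e : Module.Basis (Fin n) ℂ H := Module.finBasis ℂ H
    -- The orbit map on a basis.
    let f : A →ₗ[A] (Fin n → H) :=
      { toFun := fun b => fun i => b • e i
        map_add' := fun b c => by funext i; exact add_smul b c (e i)
        map_smul' := fun b c => by
          funext i
          show (b • c) • e i = b • (c • e i)
          rw [smul_eq_mul, mul_smul] }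
    let I : Ideal A := RingHom.ker (ν : A →+* (K →L[ℂ] K))
    have hImem : ∀ b : A, b ∈ I ↔ ν b = 0 := fun b => RingHom.mem_ker
    let N : Submodule A (Fin n → H) := Submodule.map f I
    obtain ⟨N', hc⟩ := exists_isCompl N
    let π : (Fin n → H) →ₗ[A] N' := Submodule.projectionOnto N' N hc.symm
    set x : Fin n → H := fun i => e i with hxdef
    have hbx : ∀ b ∈ I, b • x ∈ N := by
      intro b hb
      exact ⟨b, hb, rfl⟩
    -- the `N'`-component of `x` is annihilated by `I`, hence zero.
    have hv : ∀ b ∈ I, b • ((π x : Fin n → H)) = 0 := by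
      intro b hb
      have h1 : π (b • x) = 0 := Submodule.projectionOnto_apply_of_mem_right hc.symm (hbx b hb)
      have h2 : π (b • x) = b • π x := π.map_smul b x
      rw [h1] at h2
      calc b • ((π x : Fin n → H)) = ((b • π x : N') : Fin n → H) := rfl
        _ = ((0 : N') : Fin n → H) := by rw [← h2]
        _ = 0 := rfl
    have hv0 : ((π x : Fin n → H)) = 0 := by
      funext i
      have : ((π x : Fin n → H)) i ∈ S := by
        refine (hSmem _).mpr fun b hb => ?_
        have := congrFun (hv b ((hImem b).mpr hb)) i
        rwa [Pi.smul_apply, hsmul] at this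
      rw [hS] at this
      simpa using this
    -- hence `x ∈ N`.
    have hxN : x ∈ N := by
      have hxsup : x ∈ N ⊔ N' := by rw [hc.sup_eq_top]; exact Submodule.mem_top
      obtain ⟨u, hu, w, hw, huw⟩ := Submodule.mem_sup.mp hxsup
      have hπx : π x = ⟨w, hw⟩ := by
        rw [← huw, map_add]
        rw [Submodule.projectionOnto_apply_of_mem_right hc.symm hu]
        rw [show π w = ⟨w, hw⟩ from Submodule.projectionOnto_apply_left hc.symm ⟨w, hw⟩]
        rw [zero_add]
      have hw0 : w = 0 := by
        have := congrArg (Subtype.val) hπx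
        rw [hv0] at this
        exact this.symm
      rw [← huw, hw0, add_zero]
      exact hu
    obtain ⟨b, hbI, hfb⟩ := hxN
    -- `μ b = 1`.
    have hb1 : μ b = 1 := by
      apply ContinuousLinearMap.coe_injective
      refine Module.Basis.ext e fun i => ?_
      have := congrFun hfb i
      have h3 : μ b (e i) = e i := by rw [← hsmul]; exact this
      simpa using h3
    -- contradiction with `ν 1 = 1 ≠ 0`.
    have hμ0 : μ (1 - b) = 0 := by rw [map_sub, map_one, hb1, sub_self]
    have hν0 : ν (1 - b) = 0 := hker _ hμ0
    rw [map_sub, map_one, (hImem b).mp hbI, sub_zero] at hν0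
    haveI := hK
    obtain ⟨y, hy⟩ := exists_ne (0 : K)
    apply hy
    calc y = (1 : K →L[ℂ] K) y := rfl
      _ = (0 : K →L[ℂ] K) y := by rw [hν0]
      _ = 0 := rfl
  · -- `S = ⊤`: every element of `ker ν` is in `ker μ`.
    refine ContinuousLinearMap.ext fun y => ?_
    have hy : y ∈ S := hS ▸ Submodule.mem_top
    rw [(hSmem y).mp hy a hνa]
    rfl
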